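/- arXiv:1610.09438 — 3 statements merged into one kernel-verified Lean document; each statement's English description precedes it below -/
import Mathlib

section
/- Let n ≥ 2 and let u₁, …, u_m ∈ ℝⁿ be distinct points. Then the functions ω ↦ exp(i⟨u_ℓ, ω⟩), for 1 ≤ ℓ ≤ m, are linearly independent as complex-valued functions on the unit sphere S^{n-1}. -/
open Complex Filter MeasureTheory

private lemma exists_generic' {n m : ℕ} (u : Fin m → EuclideanSpace ℝ (Fin n))
    (hu : Function.Injective u) :
    ∃ v : EuclideanSpace ℝ (Fin n),
      Function.Injective (fun ℓ : Fin m => (inner ℝ (u ℓ) v : ℝ)) := by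
  have hμ : volume (⋃ p : Fin m × Fin m,
      {v : EuclideanSpace ℝ (Fin n) | p.1 ≠ p.2 ∧ (inner ℝ (u p.1 - u p.2) v : ℝ) = 0}) = 0 := by
    refine measure_iUnion_null fun p => ?_
    rcases eq_or_ne p.1 p.2 with h | h
    · simp [h]
    · have hsub : {v : EuclideanSpace ℝ (Fin n) | p.1 ≠ p.2 ∧ (inner ℝ (u p.1 - u p.2) v : ℝ) = 0}
          ⊆ (LinearMap.ker (innerSL ℝ (u p.1 - u p.2) : EuclideanSpace ℝ (Fin n) →ₗ[ℝ] ℝ) : Submodule ℝ (EuclideanSpace ℝ (Fin n))) := by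
        intro v hv
        simp only [SetLike.mem_coe, LinearMap.mem_ker, ContinuousLinearMap.coe_coe, innerSL_apply_apply]
        exact hv.2
      refine measure_mono_null hsub ?_
      refine Measure.addHaar_submodule _ _ ?_
      intro htop
      have hne : u p.1 - u p.2 ≠ 0 := sub_ne_zero.mpr (fun e => h (hu e))
      have hmem : u p.1 - u p.2 ∈ LinearMap.ker ((innerSL ℝ (u p.1 - u p.2) :
          EuclideanSpace ℝ (Fin n) →L[ℝ] ℝ) : EuclideanSpace ℝ (Fin n) →ₗ[ℝ] ℝ) :=
        htop ▸ Submodule.mem_top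
      have h0 : (inner ℝ (u p.1 - u p.2) (u p.1 - u p.2) : ℝ) = 0 := hmem
      exact hne (inner_self_eq_zero.mp h0)
  have hne : (⋃ p : Fin m × Fin m,
      {v : EuclideanSpace ℝ (Fin n) | p.1 ≠ p.2 ∧ (inner ℝ (u p.1 - u p.2) v : ℝ) = 0}) ≠ Set.univ := by
    intro h
    have := isOpen_univ.measure_ne_zero (volume : Measure (EuclideanSpace ℝ (Fin n))) Set.univ_nonempty
    rw [← h, hμ] at this
    exact this rfl
  obtain ⟨v, hv⟩ := Set.ne_univ_iff_exists_notMem _ |>.mp hne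
  refine ⟨v, fun ℓ k hlk => ?_⟩
  by_contra hne'
  exact hv (Set.mem_iUnion.mpr ⟨(ℓ, k), hne', by
    simp only [Set.mem_setOf_eq] at hlk ⊢
    rw [inner_sub_left, hlk, sub_self]⟩)

private lemma exists_generic_unit' {n m : ℕ} (hn : 2 ≤ n) (u : Fin m → EuclideanSpace ℝ (Fin n))
    (hu : Function.Injective u) :
    ∃ v : EuclideanSpace ℝ (Fin n), ‖v‖ = 1 ∧
      Function.Injective (fun ℓ : Fin m => (inner ℝ (u ℓ) v : ℝ)) := by
  obtain ⟨v₀, hv₀⟩ := exists_generic' u hu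
  rcases eq_or_ne v₀ 0 with h0 | h0
  · have hsub : ∀ ℓ k : Fin m, ℓ = k := by
      intro ℓ k
      apply hv₀
      simp [h0, inner_zero_right]
    refine ⟨EuclideanSpace.single ⟨0, by omega⟩ (1:ℝ), ?_, fun x y _ => hsub x y⟩
    simp [EuclideanSpace.norm_single]
  · refine ⟨‖v₀‖⁻¹ • v₀, ?_, ?_⟩
    · rw [norm_smul, norm_inv, norm_norm, inv_mul_cancel₀ (norm_ne_zero_iff.mpr h0)]
    · intro x y hxy
      apply hv₀
      simp only [real_inner_smul_right] at hxy
      have hne : ‖v₀‖⁻¹ ≠ 0 := inv_ne_zero (norm_ne_zero_iff.mpr h0)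
      exact mul_left_cancel₀ hne hxy

private lemma exists_ortho_unit' {n : ℕ} (hn : 2 ≤ n) (v : EuclideanSpace ℝ (Fin n))
    (hv : ‖v‖ = 1) :
    ∃ w : EuclideanSpace ℝ (Fin n), ‖w‖ = 1 ∧ (inner ℝ w v : ℝ) = 0 := by
  have hvne : v ≠ 0 := by intro h; rw [h, norm_zero] at hv; norm_num at hv
  have hbot : ((ℝ ∙ v)ᗮ : Submodule ℝ (EuclideanSpace ℝ (Fin n))) ≠ ⊥ := by
    intro h
    have htop : (ℝ ∙ v) = ⊤ := Submodule.orthogonal_eq_bot_iff.mp h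
    have h1 : Module.finrank ℝ (ℝ ∙ v) = 1 := finrank_span_singleton hvne
    rw [htop] at h1
    have h2 : Module.finrank ℝ (⊤ : Submodule ℝ (EuclideanSpace ℝ (Fin n))) = n := by
      rw [finrank_top]; simp
    omega
  obtain ⟨w₀, hw₀mem, hw₀ne⟩ := Submodule.exists_mem_ne_zero_of_ne_bot hbot
  refine ⟨‖w₀‖⁻¹ • w₀, ?_, ?_⟩
  · rw [norm_smul, norm_inv, norm_norm, inv_mul_cancel₀ (norm_ne_zero_iff.mpr hw₀ne)]
  · have : (inner ℝ w₀ v : ℝ) = 0 := by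
      have := (Submodule.mem_orthogonal _ _).mp hw₀mem v (Submodule.mem_span_singleton_self v)
      rw [← real_inner_comm]
      exact this
    rw [real_inner_smul_left, this, mul_zero]

private lemma key_exp_indep {m : ℕ} (c : Fin m → ℂ) (a b : Fin m → ℝ)
    (hb : Function.Injective b)
    (h : ∀ θ : ℝ, ∑ ℓ, c ℓ * Complex.exp (Complex.I * (a ℓ * Real.cos θ + b ℓ * Real.sin θ)) = 0) :
    ∀ ℓ, c ℓ = 0 := by
  set F : ℂ → ℂ := fun z =>
    ∑ ℓ, c ℓ * Complex.exp (Complex.I * (a ℓ * Complex.cos z + b ℓ * Complex.sin z)) with hF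
  have hdiff : Differentiable ℂ F := by
    refine Differentiable.fun_sum fun ℓ _ => Differentiable.const_mul ?_ _
    exact (Differentiable.const_mul (((Complex.differentiable_cos.const_mul _).add
      (Complex.differentiable_sin.const_mul _))) _).cexp
  have hreal : ∀ θ : ℝ, F θ = 0 := by
    intro θ
    have := h θ
    simp only [hF, ← Complex.ofReal_cos, ← Complex.ofReal_sin]
    exact this
  have hzero : ∀ z, F z = 0 := by
    have hA : AnalyticOnNhd ℂ F Set.univ := analyticOnNhd_univ_iff_differentiable.mpr hdiff
    have hfreq : ∃ᶠ z in nhdsWithin (0 : ℂ) {(0:ℂ)}ᶜ, F z = 0 := by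
      have htend : Tendsto (fun k : ℕ => ((1 / (k + 1) : ℝ) : ℂ)) atTop
          (nhdsWithin 0 {(0:ℂ)}ᶜ) := by
        refine tendsto_nhdsWithin_of_tendsto_nhds_of_eventually_within _ ?_ ?_
        · have : Tendsto (fun k : ℕ => (1 / (k + 1) : ℝ)) atTop (nhds 0) :=
            tendsto_one_div_add_atTop_nhds_zero_nat
          exact (Complex.continuous_ofReal.tendsto 0).comp this
        · filter_upwards with k
          simp only [Set.mem_compl_iff, Set.mem_singleton_iff]
          exact Complex.ofReal_ne_zero.mpr (by positivity)
      exact htend.frequently (Frequently.of_forall fun k => hreal _)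
    have := hA.eqOn_zero_of_preconnected_of_frequently_eq_zero
      isPreconnected_univ (Set.mem_univ 0) hfreq
    intro z; exact this (Set.mem_univ z)
  have him : ∀ s : ℝ, ∑ ℓ, c ℓ * Complex.exp (Complex.I * (a ℓ * Real.cosh (Real.arsinh s)))
      * Real.exp (-(b ℓ * s)) = 0 := by
    intro s
    have h0 := hzero ((Real.arsinh s : ℂ) * Complex.I)
    rw [hF] at h0
    simp only [Complex.cos_mul_I, Complex.sin_mul_I, ← Complex.ofReal_cosh, ← Complex.ofReal_sinh,
      Real.sinh_arsinh] at h0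
    rw [← h0]
    refine Finset.sum_congr rfl fun j _ => ?_
    rw [mul_assoc, Complex.ofReal_exp, ← Complex.exp_add]
    congr 2
    push_cast
    ring_nf
    rw [Complex.I_sq]
    ring
  intro ℓ
  by_contra hc
  set S : Finset (Fin m) := Finset.univ.filter (fun j => c j ≠ 0) with hS
  have hSne : S.Nonempty := ⟨ℓ, by simp [hS, hc]⟩
  obtain ⟨ℓ₀, hℓ₀S, hmin⟩ := S.exists_min_image b hSne
  have hc₀ : c ℓ₀ ≠ 0 := by simpa [hS] using (Finset.mem_filter.mp hℓ₀S).2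
  have hsum : ∀ s : ℝ, ∑ j ∈ S, c j * Complex.exp (Complex.I * (a j * Real.cosh (Real.arsinh s)))
      * Real.exp (-(b j * s)) = 0 := by
    intro s
    rw [← him s]
    refine Finset.sum_subset (Finset.subset_univ S) fun j _ hj => ?_
    have : c j = 0 := by simpa [hS] using hj
    simp [this]
  have hineq : ∀ s : ℝ, ‖c ℓ₀‖ ≤ ∑ j ∈ S.erase ℓ₀, ‖c j‖ * Real.exp ((b ℓ₀ - b j) * s) := by
    intro s
    have h1 : c ℓ₀ * Complex.exp (Complex.I * (a ℓ₀ * Real.cosh (Real.arsinh s)))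
        * Real.exp (-(b ℓ₀ * s))
        = -∑ j ∈ S.erase ℓ₀, c j * Complex.exp (Complex.I * (a j * Real.cosh (Real.arsinh s)))
        * Real.exp (-(b j * s)) := by
      have h2 := hsum s
      rw [← Finset.add_sum_erase _ _ hℓ₀S] at h2
      linear_combination h2
    have hnorm1 : ∀ j : Fin m, ‖c j * Complex.exp (Complex.I * (a j * Real.cosh (Real.arsinh s)))
        * (Real.exp (-(b j * s)) : ℂ)‖ = ‖c j‖ * Real.exp (-(b j * s)) := by
      intro j
      rw [norm_mul, norm_mul]
      have e1 : ‖Complex.exp (Complex.I * (a j * Real.cosh (Real.arsinh s)))‖ = 1 := by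
        rw [Complex.norm_exp]
        simp
      have e2 : ‖(Real.exp (-(b j * s)) : ℂ)‖ = Real.exp (-(b j * s)) := by
        rw [Complex.norm_real, Real.norm_eq_abs, abs_of_pos (Real.exp_pos _)]
      rw [e1, e2, mul_one]
    have h3 : ‖c ℓ₀‖ * Real.exp (-(b ℓ₀ * s))
        ≤ ∑ j ∈ S.erase ℓ₀, ‖c j‖ * Real.exp (-(b j * s)) := by
      calc ‖c ℓ₀‖ * Real.exp (-(b ℓ₀ * s))
          = ‖c ℓ₀ * Complex.exp (Complex.I * (a ℓ₀ * Real.cosh (Real.arsinh s)))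
            * (Real.exp (-(b ℓ₀ * s)) : ℂ)‖ := (hnorm1 ℓ₀).symm
        _ = ‖∑ j ∈ S.erase ℓ₀, c j * Complex.exp (Complex.I * (a j * Real.cosh (Real.arsinh s)))
            * (Real.exp (-(b j * s)) : ℂ)‖ := by rw [h1, norm_neg]
        _ ≤ ∑ j ∈ S.erase ℓ₀, ‖c j * Complex.exp (Complex.I * (a j * Real.cosh (Real.arsinh s)))
            * (Real.exp (-(b j * s)) : ℂ)‖ := norm_sum_le _ _
        _ = ∑ j ∈ S.erase ℓ₀, ‖c j‖ * Real.exp (-(b j * s)) :=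
            Finset.sum_congr rfl fun j _ => hnorm1 j
    calc ‖c ℓ₀‖ = (‖c ℓ₀‖ * Real.exp (-(b ℓ₀ * s))) * Real.exp (b ℓ₀ * s) := by
          rw [mul_assoc, ← Real.exp_add]; simp
      _ ≤ (∑ j ∈ S.erase ℓ₀, ‖c j‖ * Real.exp (-(b j * s))) * Real.exp (b ℓ₀ * s) :=
          mul_le_mul_of_nonneg_right h3 (Real.exp_pos _).le
      _ = ∑ j ∈ S.erase ℓ₀, ‖c j‖ * Real.exp ((b ℓ₀ - b j) * s) := by
          rw [Finset.sum_mul]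
          refine Finset.sum_congr rfl fun j _ => ?_
          rw [mul_assoc, ← Real.exp_add]
          ring_nf
  have htend : Tendsto (fun s : ℝ => ∑ j ∈ S.erase ℓ₀, ‖c j‖ * Real.exp ((b ℓ₀ - b j) * s))
      atTop (nhds 0) := by
    have : Tendsto (fun s : ℝ => ∑ j ∈ S.erase ℓ₀, ‖c j‖ * Real.exp ((b ℓ₀ - b j) * s))
        atTop (nhds (∑ j ∈ S.erase ℓ₀, (0:ℝ))) := by
      refine tendsto_finset_sum _ fun j hj => ?_
      have hj' := Finset.mem_erase.mp hj
      have hblt : b ℓ₀ < b j := lt_of_le_of_ne (hmin j hj'.2) (fun e => hj'.1 (hb e).symm)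
      have hneg : b ℓ₀ - b j < 0 := by linarith
      have : Tendsto (fun s : ℝ => (b ℓ₀ - b j) * s) atTop atBot :=
        Tendsto.const_mul_atTop_of_neg hneg tendsto_id
      simpa using (Real.tendsto_exp_atBot.comp this).const_mul ‖c j‖
    simpa using this
  have hle : ‖c ℓ₀‖ ≤ 0 := ge_of_tendsto' htend hineq
  exact hc₀ (norm_le_zero_iff.mp hle)

/-- Linear independence on the sphere of the exponentials `ω ↦ exp(i⟨u ℓ, ω⟩)`
for distinct points `u ℓ ∈ ℝⁿ`, `n ≥ 2`. -/
theorem exp_linearIndependent_on_sphere (n m : ℕ) (hn : 2 ≤ n)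
    (u : Fin m → EuclideanSpace ℝ (Fin n)) (hu : Function.Injective u) :
    LinearIndependent ℂ
      (fun ℓ : Fin m =>
        (fun ω : Metric.sphere (0 : EuclideanSpace ℝ (Fin n)) 1 =>
          Complex.exp (Complex.I * (inner ℝ (u ℓ) (ω : EuclideanSpace ℝ (Fin n)) : ℝ))
          : Metric.sphere (0 : EuclideanSpace ℝ (Fin n)) 1 → ℂ)) := by
  obtain ⟨v, hv1, hvinj⟩ := exists_generic_unit' hn u hu
  obtain ⟨w, hw1, hwv⟩ := exists_ortho_unit' hn v hv1
  rw [Fintype.linearIndependent_iff]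
  intro g hg
  set a : Fin m → ℝ := fun ℓ => (inner ℝ (u ℓ) w : ℝ) with ha
  set b : Fin m → ℝ := fun ℓ => (inner ℝ (u ℓ) v : ℝ) with hbdef
  have hmem : ∀ θ : ℝ, (Real.cos θ • w + Real.sin θ • v) ∈
      Metric.sphere (0 : EuclideanSpace ℝ (Fin n)) 1 := by
    intro θ
    rw [mem_sphere_zero_iff_norm]
    have hsq : ‖Real.cos θ • w + Real.sin θ • v‖ ^ 2 = 1 := by
      rw [norm_add_sq_real]
      rw [norm_smul, norm_smul, real_inner_smul_left, real_inner_smul_right, hwv]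
      simp [hw1, hv1, abs_of_nonneg, Real.norm_eq_abs, mul_pow, sq_abs]
    have hnn : (0:ℝ) ≤ ‖Real.cos θ • w + Real.sin θ • v‖ := norm_nonneg _
    nlinarith
  have hsumθ : ∀ θ : ℝ, ∑ ℓ, g ℓ * Complex.exp (Complex.I *
      ((a ℓ : ℝ) * Real.cos θ + (b ℓ : ℝ) * Real.sin θ)) = 0 := by
    intro θ
    have := congrFun hg ⟨_, hmem θ⟩
    simp only [Finset.sum_apply, Pi.smul_apply, smul_eq_mul, Pi.zero_apply] at this
    rw [← this]
    refine Finset.sum_congr rfl fun ℓ _ => ?_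
    congr 2
    have : (inner ℝ (u ℓ) (Real.cos θ • w + Real.sin θ • v) : ℝ)
        = a ℓ * Real.cos θ + b ℓ * Real.sin θ := by
      rw [inner_add_right, real_inner_smul_right, real_inner_smul_right, ha, hbdef]
      ring
    rw [this]
    push_cast
    ring
  exact key_exp_indep g a b hvinj hsumθ
end

section
/- Let n ≥ 2 and let u₁, …, u_m ∈ ℝⁿ be distinct points. Then the n·m functions ω ↦ ω_k · exp(i⟨u_ℓ, ω⟩), for 1 ≤ k ≤ n and 1 ≤ ℓ ≤ m, are linearly independent as complex-valued functions on the unit sphere S^{n-1}. -/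
open Filter Topology Complex

lemma entire_zero_on_real (g : ℂ → ℂ) (hg : Differentiable ℂ g)
    (h0 : ∀ x : ℝ, g x = 0) : ∀ z : ℂ, g z = 0 := by
  have hA : AnalyticOnNhd ℂ g Set.univ := fun z _ => hg.analyticAt z
  have hfreq : ∃ᶠ z : ℂ in 𝓝[≠] (0 : ℂ), g z = 0 := by
    have htend : Tendsto (fun k : ℕ => ((1 / (k + 1) : ℝ) : ℂ)) atTop (𝓝[≠] (0 : ℂ)) := by
      apply tendsto_nhdsWithin_of_tendsto_nhds_of_eventually_within
      · have : Tendsto (fun k : ℕ => (1 / (k + 1) : ℝ)) atTop (𝓝 0) :=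
          tendsto_one_div_add_atTop_nhds_zero_nat
        exact (Complex.continuous_ofReal.tendsto 0).comp this
      · filter_upwards with k
        simp only [Set.mem_compl_iff, Set.mem_singleton_iff]
        intro h
        have : (1 / (k + 1) : ℝ) = 0 := by exact_mod_cast h
        have : (0:ℝ) < 1 / (k+1) := by positivity
        linarith
    exact htend.frequently (Frequently.of_forall fun k => h0 _)
  have := hA.eqOn_zero_of_preconnected_of_frequently_eq_zero isPreconnected_univ
    (Set.mem_univ 0) hfreq
  exact fun z => this (Set.mem_univ z)


lemma tendsto_exp_lin_sub_sinh (c δ : ℝ) (hδ : 0 < δ) :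
    Tendsto (fun t : ℝ => Real.exp (c * t - δ * Real.sinh t)) atTop (𝓝 0) := by
  have h1 : Tendsto (fun t : ℝ => c * t - δ * Real.sinh t) atTop atBot := by
    -- bound: c*t - δ*sinh t ≤ -t eventually
    apply tendsto_atBot_mono' atTop (f₁ := fun t : ℝ => -t)
    · -- eventually c*t - δ sinh t ≤ -t, i.e. (c+1) t ≤ δ sinh t
      have hlin : Tendsto (fun t : ℝ => (c + 1) * t * Real.exp (-t)) atTop (𝓝 0) := by
        have := Real.tendsto_pow_mul_exp_neg_atTop_nhds_zero 1
        have := this.const_mul (c + 1)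
        simpa [mul_assoc, mul_comm, mul_left_comm] using this
      have hev : ∀ᶠ t : ℝ in atTop, (c + 1) * t * Real.exp (-t) ≤ δ / 4 :=
        hlin.eventually_le_const (by positivity)
      filter_upwards [hev, eventually_ge_atTop (1 : ℝ),
        eventually_ge_atTop (Real.log (4 / δ) + 1)] with t h4 ht1 htlog
      -- sinh t ≥ (exp t - 1)/2 ≥ ... ; use sinh t = (e^t - e^{-t})/2
      have hsinh : Real.sinh t = (Real.exp t - Real.exp (-t)) / 2 := Real.sinh_eq t
      have hexp1 : Real.exp (-t) ≤ 1 := by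
        rw [Real.exp_le_one_iff]; linarith
      have hct : (c + 1) * t ≤ δ / 4 * Real.exp t := by
        have := mul_le_mul_of_nonneg_right h4 (Real.exp_pos t).le
        rw [mul_assoc, ← Real.exp_add] at this
        simpa using this
      -- want: c*t - δ*sinh t ≤ -t  ⟺  (c+1)*t ≤ δ * sinh t ... not exactly since c*t + t = (c+1) t
      have h2 : (2:ℝ) ≤ Real.exp t := by
        have := Real.add_one_le_exp (1:ℝ)
        have := Real.exp_le_exp.2 ht1
        linarith
      have hδs : δ / 4 * Real.exp t ≤ δ * Real.sinh t := by
        rw [hsinh]; nlinarith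
      nlinarith [hδ]
    · exact tendsto_neg_atBot_iff.mpr tendsto_id
  exact Real.tendsto_exp_atBot.comp h1



lemma tendsto_cosh_mul_exp_neg :
    Filter.Tendsto (fun t : ℝ => Real.cosh t * Real.exp (-t)) Filter.atTop (𝓝 (1/2)) := by
  have hexp2 : Filter.Tendsto (fun t : ℝ => Real.exp (-(2*t))) Filter.atTop (𝓝 0) :=
    Real.tendsto_exp_atBot.comp (tendsto_neg_atBot_iff.mpr (tendsto_id.const_mul_atTop two_pos))
  have heq : ∀ t : ℝ, Real.cosh t * Real.exp (-t) = (1 + Real.exp (-(2*t))) / 2 := by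
    intro t
    rw [Real.cosh_eq]
    rw [div_mul_eq_mul_div, add_mul, ← Real.exp_add, ← Real.exp_add]
    norm_num
    ring_nf
  simp only [heq]
  have := (hexp2.const_add 1).div_const 2
  simpa using this

lemma tendsto_sinh_mul_exp_neg :
    Filter.Tendsto (fun t : ℝ => Real.sinh t * Real.exp (-t)) Filter.atTop (𝓝 (1/2)) := by
  have hexp2 : Filter.Tendsto (fun t : ℝ => Real.exp (-(2*t))) Filter.atTop (𝓝 0) :=
    Real.tendsto_exp_atBot.comp (tendsto_neg_atBot_iff.mpr (tendsto_id.const_mul_atTop two_pos))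
  have heq : ∀ t : ℝ, Real.sinh t * Real.exp (-t) = (1 - Real.exp (-(2*t))) / 2 := by
    intro t
    rw [Real.sinh_eq]
    rw [div_mul_eq_mul_div, sub_mul, ← Real.exp_add, ← Real.exp_add]
    norm_num
    ring_nf
  simp only [heq]
  have := (hexp2.const_sub 1).div_const 2
  simpa using this

lemma coeff_zero_of_norm_le (a b : ℂ) (S : ℝ → ℝ)
    (hle : ∀ t : ℝ, ‖a * Real.cosh t + b * (Real.sinh t * I)‖ ≤ S t)
    (hS : Tendsto (fun t : ℝ => Real.exp t * S t) atTop (𝓝 0)) : a = 0 ∧ b = 0 := by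
  have hexpneg : Tendsto (fun t : ℝ => Real.exp (-t)) atTop (𝓝 0) :=
    Real.tendsto_exp_atBot.comp tendsto_neg_atTop_atBot
  have hS0 : Tendsto S atTop (𝓝 0) := by
    have h := hexpneg.mul hS
    have he : ∀ t : ℝ, Real.exp (-t) * (Real.exp t * S t) = S t := by
      intro t; rw [← mul_assoc, ← Real.exp_add]; simp
    simp only [he] at h
    simpa using h
  have hSneg : Tendsto (fun t : ℝ => Real.exp (-t) * S t) atTop (𝓝 0) := by
    simpa using hexpneg.mul hS0
  -- limits of cosh/sinh * exp(-t)
  have c1 := tendsto_cosh_mul_exp_neg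
  have s1 := tendsto_sinh_mul_exp_neg
  -- F tends to (a + b*I)/2
  have hF : Tendsto (fun t : ℝ => (a * Real.cosh t + b * (Real.sinh t * I)) * (Real.exp (-t) : ℝ))
      atTop (𝓝 ((a + b * I) / 2)) := by
    have key : ∀ t : ℝ, (a * Real.cosh t + b * (Real.sinh t * I)) * (Real.exp (-t) : ℝ)
        = a * ((Real.cosh t * Real.exp (-t) : ℝ) : ℂ)
          + b * I * ((Real.sinh t * Real.exp (-t) : ℝ) : ℂ) := by
      intro t; push_cast; ring
    simp only [key]
    have hc : Tendsto (fun t : ℝ => ((Real.cosh t * Real.exp (-t) : ℝ) : ℂ)) atTop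
        (𝓝 ((1/2 : ℝ) : ℂ)) := (Complex.continuous_ofReal.tendsto _).comp c1
    have hs : Tendsto (fun t : ℝ => ((Real.sinh t * Real.exp (-t) : ℝ) : ℂ)) atTop
        (𝓝 ((1/2 : ℝ) : ℂ)) := (Complex.continuous_ofReal.tendsto _).comp s1
    have := (hc.const_mul a).add (hs.const_mul (b * I))
    convert this using 2
    push_cast; ring
  have hab : a + b * I = 0 := by
    have hnorm2 : Tendsto (fun t : ℝ => ‖(a * Real.cosh t + b * (Real.sinh t * I)) * (Real.exp (-t) : ℝ)‖)
        atTop (𝓝 ‖(a + b * I) / 2‖) := hF.norm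
    have hle2 : ∀ t : ℝ, ‖(a * Real.cosh t + b * (Real.sinh t * I)) * (Real.exp (-t) : ℝ)‖
        ≤ Real.exp (-t) * S t := by
      intro t
      rw [norm_mul]
      have h1 := hle t
      have h2 : ‖((Real.exp (-t) : ℝ) : ℂ)‖ = Real.exp (-t) := by
        rw [Complex.norm_real, Real.norm_eq_abs, abs_of_pos (Real.exp_pos _)]
      rw [h2, mul_comm]
      exact mul_le_mul_of_nonneg_left h1 (Real.exp_pos _).le
    have := le_of_tendsto_of_tendsto' hnorm2 hSneg hle2
    have h0 : ‖(a + b * I) / 2‖ = 0 := le_antisymm this (norm_nonneg _)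
    have := norm_eq_zero.mp h0
    field_simp at this
    simpa using this
  have hb : b = 0 := by
    have ha' : a = -(b * I) := by linear_combination hab
    have hle3 : ∀ t : ℝ, ‖b‖ ≤ Real.exp t * S t := by
      intro t
      have hkey : a * Real.cosh t + b * (Real.sinh t * I)
          = b * I * ((Real.sinh t - Real.cosh t : ℝ) : ℂ) := by
        rw [ha']; push_cast; ring
      have hsc : Real.sinh t - Real.cosh t = -Real.exp (-t) := by
        rw [Real.sinh_eq, Real.cosh_eq]; ring
      have h1 := hle t
      rw [hkey, hsc] at h1
      have h2 : ‖b * I * ((-Real.exp (-t) : ℝ) : ℂ)‖ = ‖b‖ * Real.exp (-t) := by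
        rw [norm_mul, norm_mul, Complex.norm_I, mul_one, Complex.norm_real,
          Real.norm_eq_abs, abs_neg, abs_of_pos (Real.exp_pos _)]
      rw [h2] at h1
      have := mul_le_mul_of_nonneg_left h1 (Real.exp_pos t).le
      calc ‖b‖ = Real.exp t * (‖b‖ * Real.exp (-t)) := by
              rw [← mul_assoc, mul_comm (Real.exp t), mul_assoc, ← Real.exp_add]
              simp
        _ ≤ Real.exp t * S t := this
    have : ‖b‖ ≤ 0 := le_of_tendsto_of_tendsto' tendsto_const_nhds hS hle3
    exact norm_eq_zero.mp (le_antisymm this (norm_nonneg _))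
  refine ⟨?_, hb⟩
  have := hab
  rw [hb] at this
  simpa using this

lemma key {m : ℕ} (s : Finset (Fin m)) (α β : Fin m → ℝ) (a b : Fin m → ℂ)
    (ℓ₀ : Fin m) (hℓ₀ : ℓ₀ ∈ s) (hβ : ∀ ℓ ∈ s, ℓ ≠ ℓ₀ → β ℓ₀ < β ℓ)
    (H : ∀ θ : ℝ, ∑ ℓ ∈ s, (a ℓ * Real.cos θ + b ℓ * Real.sin θ) *
        Complex.exp (I * (α ℓ * Real.cos θ + β ℓ * Real.sin θ)) = 0) :
    a ℓ₀ = 0 ∧ b ℓ₀ = 0 := by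
  classical
  set g : ℂ → ℂ := fun z => ∑ ℓ ∈ s, (a ℓ * Complex.cos z + b ℓ * Complex.sin z) *
      Complex.exp (I * ((α ℓ : ℂ) * Complex.cos z + (β ℓ : ℂ) * Complex.sin z)) with hgdef
  have hg : Differentiable ℂ g := by
    apply Differentiable.fun_sum
    intro ℓ _
    fun_prop
  have h0 : ∀ x : ℝ, g x = 0 := by
    intro x
    have := H x
    simp only [hgdef]
    rw [← this]
    apply Finset.sum_congr rfl
    intro ℓ _
    push_cast [← Complex.ofReal_cos, ← Complex.ofReal_sin]
    ring
  have hz := entire_zero_on_real g hg h0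
  -- evaluate at t*I, in factored form
  have H2 : ∀ t : ℝ, ∑ ℓ ∈ s, (a ℓ * (Real.cosh t : ℂ) + b ℓ * ((Real.sinh t : ℂ) * I)) *
      (Complex.exp (((α ℓ * Real.cosh t : ℝ) : ℂ) * I) *
        ((Real.exp (-(β ℓ * Real.sinh t)) : ℝ) : ℂ)) = 0 := by
    intro t
    have h := hz ((t : ℂ) * I)
    simp only [hgdef] at h
    rw [← h]
    apply Finset.sum_congr rfl
    intro ℓ _
    rw [Complex.cos_mul_I, Complex.sin_mul_I, ← Complex.ofReal_cosh, ← Complex.ofReal_sinh]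
    rw [Complex.ofReal_exp, ← Complex.exp_add]
    congr 1
    · congr 1
      push_cast
      linear_combination (-(β ℓ : ℂ) * Complex.sinh (t:ℂ)) * Complex.I_sq
  set S : ℝ → ℝ := fun t => ∑ ℓ ∈ s.erase ℓ₀, (‖a ℓ‖ + ‖b ℓ‖) *
      (Real.cosh t * Real.exp (-((β ℓ - β ℓ₀) * Real.sinh t))) with hSdef
  have hle : ∀ t : ℝ, ‖a ℓ₀ * (Real.cosh t : ℂ) + b ℓ₀ * ((Real.sinh t : ℂ) * I)‖ ≤ S t := by
    intro t
    set X : Fin m → ℂ := fun ℓ => a ℓ * (Real.cosh t : ℂ) + b ℓ * ((Real.sinh t : ℂ) * I) with hXdef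
    have hterm : ∀ ℓ, ‖X ℓ * (Complex.exp (((α ℓ * Real.cosh t : ℝ) : ℂ) * I) *
        ((Real.exp (-(β ℓ * Real.sinh t)) : ℝ) : ℂ))‖
        = ‖X ℓ‖ * Real.exp (-(β ℓ * Real.sinh t)) := by
      intro ℓ
      rw [norm_mul, norm_mul,
        Complex.norm_exp_ofReal_mul_I, one_mul, Complex.norm_real, Real.norm_eq_abs,
        abs_of_pos (Real.exp_pos _)]
    have hsplit := Finset.add_sum_erase s (fun ℓ => X ℓ *
      (Complex.exp (((α ℓ * Real.cosh t : ℝ) : ℂ) * I) *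
        ((Real.exp (-(β ℓ * Real.sinh t)) : ℝ) : ℂ))) hℓ₀
    have h2 := H2 t
    rw [← hsplit] at h2
    have hX0 : ‖X ℓ₀‖ * Real.exp (-(β ℓ₀ * Real.sinh t)) ≤
        ∑ ℓ ∈ s.erase ℓ₀, ‖X ℓ‖ * Real.exp (-(β ℓ * Real.sinh t)) := by
      rw [← hterm ℓ₀]
      have : X ℓ₀ * (Complex.exp (((α ℓ₀ * Real.cosh t : ℝ) : ℂ) * I) *
          ((Real.exp (-(β ℓ₀ * Real.sinh t)) : ℝ) : ℂ)) =
          -∑ ℓ ∈ s.erase ℓ₀, X ℓ * (Complex.exp (((α ℓ * Real.cosh t : ℝ) : ℂ) * I) *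
          ((Real.exp (-(β ℓ * Real.sinh t)) : ℝ) : ℂ)) := by
        linear_combination h2
      rw [this, norm_neg]
      refine (norm_sum_le _ _).trans ?_
      apply Finset.sum_le_sum
      intro ℓ _
      rw [hterm ℓ]
    -- bound ‖X ℓ‖ by (‖a‖+‖b‖) * cosh
    have habs_sinh : |Real.sinh t| ≤ Real.cosh t := by
      have h1 := Real.cosh_sq t
      have h2 := Real.cosh_pos t
      nlinarith [_root_.sq_abs (Real.sinh t), abs_nonneg (Real.sinh t)]
    have hXb : ∀ ℓ, ‖X ℓ‖ ≤ (‖a ℓ‖ + ‖b ℓ‖) * Real.cosh t := by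
      intro ℓ
      refine (norm_add_le _ _).trans ?_
      rw [norm_mul, norm_mul, norm_mul, Complex.norm_real, Complex.norm_real, Complex.norm_I,
        mul_one, Real.norm_eq_abs, Real.norm_eq_abs, abs_of_pos (Real.cosh_pos t)]
      have hc := Real.cosh_pos t
      nlinarith [norm_nonneg (a ℓ), norm_nonneg (b ℓ), habs_sinh]
    -- multiply through by exp (β ℓ₀ * sinh t)
    have hkey : ‖X ℓ₀‖ = (‖X ℓ₀‖ * Real.exp (-(β ℓ₀ * Real.sinh t))) *
        Real.exp (β ℓ₀ * Real.sinh t) := by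
      rw [mul_assoc, ← Real.exp_add]; simp
    rw [hkey]
    calc (‖X ℓ₀‖ * Real.exp (-(β ℓ₀ * Real.sinh t))) * Real.exp (β ℓ₀ * Real.sinh t)
        ≤ (∑ ℓ ∈ s.erase ℓ₀, ‖X ℓ‖ * Real.exp (-(β ℓ * Real.sinh t))) *
          Real.exp (β ℓ₀ * Real.sinh t) :=
          mul_le_mul_of_nonneg_right hX0 (Real.exp_pos _).le
      _ = ∑ ℓ ∈ s.erase ℓ₀, ‖X ℓ‖ * Real.exp (-((β ℓ - β ℓ₀) * Real.sinh t)) := by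
          rw [Finset.sum_mul]
          apply Finset.sum_congr rfl
          intro ℓ _
          rw [mul_assoc, ← Real.exp_add]
          congr 2
          ring
      _ ≤ S t := by
          simp only [hSdef]
          apply Finset.sum_le_sum
          intro ℓ _
          have hb := mul_le_mul_of_nonneg_right (hXb ℓ)
            (Real.exp_pos (-((β ℓ - β ℓ₀) * Real.sinh t))).le
          calc ‖X ℓ‖ * Real.exp (-((β ℓ - β ℓ₀) * Real.sinh t))
              ≤ (‖a ℓ‖ + ‖b ℓ‖) * Real.cosh t *
                Real.exp (-((β ℓ - β ℓ₀) * Real.sinh t)) := hb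
            _ = (‖a ℓ‖ + ‖b ℓ‖) *
                (Real.cosh t * Real.exp (-((β ℓ - β ℓ₀) * Real.sinh t))) := by ring
  have hS : Tendsto (fun t : ℝ => Real.exp t * S t) atTop (𝓝 0) := by
    have hrw : ∀ t : ℝ, Real.exp t * S t = ∑ ℓ ∈ s.erase ℓ₀, (‖a ℓ‖ + ‖b ℓ‖) *
        ((Real.cosh t * Real.exp (-t)) * Real.exp (2 * t - (β ℓ - β ℓ₀) * Real.sinh t)) := by
      intro t
      simp only [hSdef, Finset.mul_sum]
      apply Finset.sum_congr rfl
      intro ℓ _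
      have e1 : Real.exp (-t) * Real.exp (2*t - (β ℓ - β ℓ₀) * Real.sinh t)
          = Real.exp t * Real.exp (-((β ℓ - β ℓ₀) * Real.sinh t)) := by
        rw [← Real.exp_add, ← Real.exp_add]
        congr 1
        ring
      linear_combination (-(‖a ℓ‖ + ‖b ℓ‖)) * Real.cosh t * e1
    simp only [hrw]
    have hzero : ∀ ℓ ∈ s.erase ℓ₀, Tendsto (fun t : ℝ => (‖a ℓ‖ + ‖b ℓ‖) *
        ((Real.cosh t * Real.exp (-t)) * Real.exp (2 * t - (β ℓ - β ℓ₀) * Real.sinh t)))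
        atTop (𝓝 0) := by
      intro ℓ hℓ
      have hδ : 0 < β ℓ - β ℓ₀ :=
        sub_pos.2 (hβ ℓ (Finset.mem_of_mem_erase hℓ) (Finset.ne_of_mem_erase hℓ))
      have hdecay := tendsto_exp_lin_sub_sinh 2 (β ℓ - β ℓ₀) hδ
      have := (tendsto_cosh_mul_exp_neg.mul hdecay).const_mul (‖a ℓ‖ + ‖b ℓ‖)
      simpa using this
    have := tendsto_finset_sum (s.erase ℓ₀) hzero
    simpa using this
  exact coeff_zero_of_norm_le _ _ S hle hS


lemma exists_good_direction {n m : ℕ} (hn : 2 ≤ n) (u : Fin m → EuclideanSpace ℝ (Fin n))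
    (s : Finset (Fin m)) (hu : Set.InjOn u s) :
    ∃ w : EuclideanSpace ℝ (Fin n), ‖w‖ = 1 ∧
      ∀ ℓ ∈ s, ∀ ℓ' ∈ s, ℓ ≠ ℓ' → (inner ℝ (u ℓ) w : ℝ) ≠ (inner ℝ (u ℓ') w : ℝ) := by
  classical
  haveI : Nontrivial (EuclideanSpace ℝ (Fin n)) := by
    refine ⟨EuclideanSpace.single (⟨0, by omega⟩ : Fin n) (1:ℝ), 0, ?_⟩
    intro h
    have := congrArg (· (⟨0, by omega⟩ : Fin n)) h
    simp [EuclideanSpace.single_apply] at this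
  set T : Finset (Subspace ℝ (EuclideanSpace ℝ (Fin n))) :=
    insert ⊥ (Finset.image (fun p : Fin m × Fin m =>
      LinearMap.ker ((innerSL ℝ (u p.1 - u p.2)).toLinearMap))
      ((s ×ˢ s).filter (fun p => p.1 ≠ p.2))) with hT
  have hTtop : ⊤ ∉ T := by
    simp only [hT, Finset.mem_insert, Finset.mem_image, Finset.mem_filter, Finset.mem_product]
    push_neg
    constructor
    · exact fun h => bot_ne_top h.symm |>.elim -- ⊤ = ⊥ false
    · rintro ⟨ℓ, ℓ'⟩ ⟨⟨hℓ, hℓ'⟩, hne⟩ heq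
      have hd : u ℓ - u ℓ' ≠ 0 := sub_ne_zero.2 fun h => hne (hu hℓ hℓ' h)
      have : innerSL ℝ (u ℓ - u ℓ') (u ℓ - u ℓ') = 0 := by
        have := LinearMap.ker_eq_top.mp heq
        have h2 := congrFun (congrArg (fun f => f.toFun) this) (u ℓ - u ℓ')
        simpa using h2
      rw [innerSL_apply_apply] at this
      exact hd (inner_self_eq_zero.mp this)
  have hne := Subspace.biUnion_ne_univ_of_top_notMem (k := ℝ)
    (E := EuclideanSpace ℝ (Fin n)) hTtop
  obtain ⟨w₀, hw₀⟩ := (Set.ne_univ_iff_exists_notMem _).mp hne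
  simp only [Set.mem_iUnion, not_exists] at hw₀
  have hw0ne : w₀ ≠ 0 := by
    intro h
    exact hw₀ ⊥ (Finset.mem_insert_self _ _) (by simp [h])
  refine ⟨‖w₀‖⁻¹ • w₀, norm_smul_inv_norm hw0ne, ?_⟩
  intro ℓ hℓ ℓ' hℓ' hne' heq
  have hker : w₀ ∈ LinearMap.ker ((innerSL ℝ (u ℓ - u ℓ')).toLinearMap) := by
    rw [LinearMap.mem_ker]
    have : (inner ℝ (u ℓ - u ℓ') w₀ : ℝ) = 0 := by
      rw [inner_sub_left]
      have h1 : (inner ℝ (u ℓ) (‖w₀‖⁻¹ • w₀) : ℝ) = (inner ℝ (u ℓ') (‖w₀‖⁻¹ • w₀) : ℝ) := heq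
      rw [real_inner_smul_right, real_inner_smul_right] at h1
      have hpos : ‖w₀‖⁻¹ ≠ 0 := inv_ne_zero (norm_ne_zero_iff.2 hw0ne)
      have := mul_left_cancel₀ hpos h1
      linarith
    simpa [innerSL_apply_apply, inner_sub_left, sub_mul, Finset.sum_sub_distrib] using this
  exact hw₀ _ (Finset.mem_insert_of_mem (Finset.mem_image.2
    ⟨(ℓ, ℓ'), Finset.mem_filter.2 ⟨Finset.mem_product.2 ⟨hℓ, hℓ'⟩, hne'⟩, rfl⟩)) hker

lemma main_induction {n m : ℕ} (hn : 2 ≤ n) (u : Fin m → EuclideanSpace ℝ (Fin n))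
    (c : Fin m → Fin n → ℂ) :
    ∀ s : Finset (Fin m), Set.InjOn u s →
      (∀ ω : EuclideanSpace ℝ (Fin n), ‖ω‖ = 1 →
        ∑ ℓ ∈ s, (∑ k, c ℓ k * ((ω k : ℝ) : ℂ)) *
          Complex.exp (I * ((inner ℝ (u ℓ) ω : ℝ) : ℂ)) = 0) →
      ∀ ℓ ∈ s, c ℓ = 0 := by
  classical
  intro s
  induction s using Finset.strongInduction with
  | _ s ih =>
    intro hinj H ℓ hℓ
    obtain ⟨w, hw, hwgood⟩ := exists_good_direction hn u s hinj
    have hwself : (inner ℝ w w : ℝ) = 1 := by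
      rw [real_inner_self_eq_norm_sq, hw]; norm_num
    set β : Fin m → ℝ := fun ℓ' => (inner ℝ (u ℓ') w : ℝ) with hβdef
    obtain ⟨ℓ₀, hℓ₀, hmin⟩ := Finset.exists_min_image s β ⟨ℓ, hℓ⟩
    have hβstrict : ∀ ℓ' ∈ s, ℓ' ≠ ℓ₀ → β ℓ₀ < β ℓ' := by
      intro ℓ' hℓ' hne
      exact lt_of_le_of_ne (hmin ℓ' hℓ') (hwgood ℓ₀ hℓ₀ ℓ' hℓ' (Ne.symm hne))
    -- Claim A
    have claimA : ∀ v : EuclideanSpace ℝ (Fin n), ‖v‖ = 1 → (inner ℝ v w : ℝ) = 0 →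
        (∑ k, c ℓ₀ k * ((v k : ℝ) : ℂ)) = 0 ∧ (∑ k, c ℓ₀ k * ((w k : ℝ) : ℂ)) = 0 := by
      intro v hv hvw
      have hvself : (inner ℝ v v : ℝ) = 1 := by
        rw [real_inner_self_eq_norm_sq, hv]; norm_num
      apply key s (fun ℓ' => (inner ℝ (u ℓ') v : ℝ)) β
        (fun ℓ' => ∑ k, c ℓ' k * ((v k : ℝ) : ℂ))
        (fun ℓ' => ∑ k, c ℓ' k * ((w k : ℝ) : ℂ)) ℓ₀ hℓ₀ hβstrict
      intro θ
      set ω : EuclideanSpace ℝ (Fin n) := Real.cos θ • v + Real.sin θ • w with hωdef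
      have hωnorm : ‖ω‖ = 1 := by
        have h1 : (inner ℝ ω ω : ℝ) = 1 := by
          simp only [hωdef, inner_add_left, inner_add_right, real_inner_smul_left,
            real_inner_smul_right, hvself, hwself, hvw, real_inner_comm w v]
          rw [real_inner_comm w v] at *
          simp [hvw]
          nlinarith [Real.sin_sq_add_cos_sq θ]
        have h2 : ‖ω‖ ^ 2 = 1 := by rw [← real_inner_self_eq_norm_sq]; exact h1
        nlinarith [norm_nonneg ω]
      have hωk : ∀ k, ω k = Real.cos θ * v k + Real.sin θ * w k := by
        intro k
        simp [hωdef, PiLp.add_apply, PiLp.smul_apply, smul_eq_mul]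
      have hcoeff : ∀ ℓ', (∑ k, c ℓ' k * ((ω k : ℝ) : ℂ)) =
          (∑ k, c ℓ' k * ((v k : ℝ) : ℂ)) * Real.cos θ +
          (∑ k, c ℓ' k * ((w k : ℝ) : ℂ)) * Real.sin θ := by
        intro ℓ'
        rw [Finset.sum_mul, Finset.sum_mul, ← Finset.sum_add_distrib]
        apply Finset.sum_congr rfl
        intro k _
        rw [hωk k]
        push_cast
        ring
      have hinner : ∀ ℓ', (inner ℝ (u ℓ') ω : ℝ) =
          (inner ℝ (u ℓ') v : ℝ) * Real.cos θ + β ℓ' * Real.sin θ := by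
        intro ℓ'
        simp only [hωdef, inner_add_right, real_inner_smul_right, hβdef]
        ring
      have := H ω hωnorm
      rw [← this]
      apply Finset.sum_congr rfl
      intro ℓ' _
      rw [hcoeff ℓ', hinner ℓ']
      push_cast
      ring
    -- the linear functional L
    set L : EuclideanSpace ℝ (Fin n) → ℂ := fun x => ∑ k, c ℓ₀ k * ((x k : ℝ) : ℂ) with hLdef
    have Lzero : ∀ x : EuclideanSpace ℝ (Fin n), (inner ℝ x w : ℝ) = 0 → L x = 0 := by
      intro x hx
      rcases eq_or_ne x 0 with hx0 | hx0
      · simp [hLdef, hx0]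
      · set v := ‖x‖⁻¹ • x with hvdef
        have hv : ‖v‖ = 1 := norm_smul_inv_norm hx0
        have hvw : (inner ℝ v w : ℝ) = 0 := by
          rw [hvdef, real_inner_smul_left, hx, mul_zero]
        have h := (claimA v hv hvw).1
        have hnx : ‖x‖ ≠ 0 := norm_ne_zero_iff.2 hx0
        have : L x = (‖x‖ : ℂ) * L v := by
          simp only [hLdef, Finset.mul_sum]
          apply Finset.sum_congr rfl
          intro k _
          have hk : v k = ‖x‖⁻¹ * x k := by
            simp [hvdef, PiLp.smul_apply, smul_eq_mul]
          rw [hk]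
          push_cast
          have h2 : (‖x‖ : ℂ) ≠ 0 := by exact_mod_cast hnx
          field_simp [h2]
        rw [this]
        have h' : L v = 0 := h
        rw [h', mul_zero]
    -- w-component zero : need an orthogonal unit vector
    have Lw : L w = 0 := by
      have hexist : ∃ y : EuclideanSpace ℝ (Fin n), y ≠ 0 ∧ (inner ℝ y w : ℝ) = 0 := by
        by_contra hcon
        push_neg at hcon
        have hsq : ∀ j : Fin n, w j ^ 2 = 1 := by
          intro j
          set y : EuclideanSpace ℝ (Fin n) :=
            EuclideanSpace.single j (1:ℝ) - (w j) • w with hydef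
          have hyw : (inner ℝ y w : ℝ) = 0 := by
            rw [hydef, inner_sub_left, real_inner_smul_left, hwself,
              EuclideanSpace.inner_single_left]
            simp
          have hy0 : y = 0 := by
            by_contra hy0
            exact hy0 (by exact absurd hyw (by simpa using hcon y hy0))
          have : EuclideanSpace.single j (1:ℝ) = (w j) • w := by
            have := sub_eq_zero.mp (hydef ▸ hy0)
            exact this
          have hj := congrArg (· j) this
          simp [EuclideanSpace.single_apply, PiLp.smul_apply, smul_eq_mul] at hj
          nlinarith [hj]
        have hsum : ∑ j : Fin n, w j ^ 2 = 1 := by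
          have h := hwself
          rw [PiLp.inner_apply] at h
          simpa [RCLike.inner_apply, pow_two] using h
        rw [Finset.sum_congr rfl (fun j _ => hsq j)] at hsum
        simp [Finset.card_univ] at hsum
        omega
      obtain ⟨y, hy0, hyw⟩ := hexist
      set v := ‖y‖⁻¹ • y with hvdef
      have hv : ‖v‖ = 1 := norm_smul_inv_norm hy0
      have hvw : (inner ℝ v w : ℝ) = 0 := by
        rw [hvdef, real_inner_smul_left, hyw, mul_zero]
      exact (claimA v hv hvw).2
    have Lall : ∀ x : EuclideanSpace ℝ (Fin n), L x = 0 := by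
      intro x
      set y : EuclideanSpace ℝ (Fin n) := x - (inner ℝ x w : ℝ) • w with hydef
      have hyw : (inner ℝ y w : ℝ) = 0 := by
        rw [hydef, inner_sub_left, real_inner_smul_left, hwself, mul_one, sub_self]
      have hsplit : L x = L y + ((inner ℝ x w : ℝ) : ℂ) * L w := by
        simp only [hLdef, hydef, PiLp.sub_apply, PiLp.smul_apply, smul_eq_mul, Finset.mul_sum,
          ← Finset.sum_add_distrib]
        apply Finset.sum_congr rfl
        intro k _
        push_cast
        ring
      rw [hsplit, Lzero y hyw, Lw, mul_zero, add_zero]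
    have hc0 : c ℓ₀ = 0 := by
      funext k
      have := Lall (EuclideanSpace.single k (1:ℝ))
      simp only [hLdef, EuclideanSpace.single_apply] at this
      rw [Finset.sum_eq_single k] at this
      · simpa using this
      · intro j _ hj
        simp [hj]
      · intro hk
        exact absurd (Finset.mem_univ k) hk
    rcases eq_or_ne ℓ ℓ₀ with rfl | hne
    · exact hc0
    · -- reduce to s.erase ℓ₀
      have H' : ∀ ω : EuclideanSpace ℝ (Fin n), ‖ω‖ = 1 →
          ∑ ℓ' ∈ s.erase ℓ₀, (∑ k, c ℓ' k * ((ω k : ℝ) : ℂ)) *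
            Complex.exp (I * ((inner ℝ (u ℓ') ω : ℝ) : ℂ)) = 0 := by
        intro ω hω
        have h := H ω hω
        rw [← Finset.add_sum_erase s _ hℓ₀] at h
        simpa [hc0] using h
      exact ih (s.erase ℓ₀) (Finset.erase_ssubset hℓ₀)
        (hinj.mono (by simp [Finset.coe_subset.2 (Finset.erase_subset _ _)]))
        H' ℓ (Finset.mem_erase.2 ⟨hne, hℓ⟩)

/-- Linear independence on the sphere of the functions `ω ↦ ω k · exp(i⟨u ℓ, ω⟩)`
for distinct points `u ℓ ∈ ℝⁿ`, `n ≥ 2`, `1 ≤ k ≤ n`. -/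
theorem coord_mul_exp_linearIndependent_on_sphere (n m : ℕ) (hn : 2 ≤ n)
    (u : Fin m → EuclideanSpace ℝ (Fin n)) (hu : Function.Injective u) :
    LinearIndependent ℂ
      (fun p : Fin n × Fin m =>
        (fun ω : Metric.sphere (0 : EuclideanSpace ℝ (Fin n)) 1 =>
          ((ω : EuclideanSpace ℝ (Fin n)) p.1 : ℂ) *
            Complex.exp (Complex.I *
              (inner ℝ (u p.2) (ω : EuclideanSpace ℝ (Fin n)) : ℝ))
          : Metric.sphere (0 : EuclideanSpace ℝ (Fin n)) 1 → ℂ)) := by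
  rw [Fintype.linearIndependent_iff]
  intro g hg p
  set c : Fin m → Fin n → ℂ := fun ℓ k => g (k, ℓ) with hcdef
  have H : ∀ ω : EuclideanSpace ℝ (Fin n), ‖ω‖ = 1 →
      ∑ ℓ ∈ Finset.univ, (∑ k, c ℓ k * ((ω k : ℝ) : ℂ)) *
        Complex.exp (I * ((inner ℝ (u ℓ) ω : ℝ) : ℂ)) = 0 := by
    intro ω hω
    have hmem : ω ∈ Metric.sphere (0 : EuclideanSpace ℝ (Fin n)) 1 :=
      mem_sphere_zero_iff_norm.2 hω
    have := congrFun hg (⟨ω, hmem⟩ : Metric.sphere (0 : EuclideanSpace ℝ (Fin n)) 1)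
    simp only [Finset.sum_apply, Pi.smul_apply, smul_eq_mul, Pi.zero_apply] at this
    rw [← this]
    rw [Fintype.sum_prod_type_right]
    apply Finset.sum_congr rfl
    intro ℓ _
    rw [Finset.sum_mul]
    apply Finset.sum_congr rfl
    intro k _
    push_cast
    ring
  have := main_induction hn u c Finset.univ (hu.injOn) H p.2 (Finset.mem_univ _)
  have := congrFun this p.1
  simpa [hcdef] using this
end

section
/- The spherical integral identity: ∫₀^π ∫₀^{2π} |3 sin²θ cos²φ − 1| sinθ dφ dθ = (16π)/(3√3) (equivalently, the average over S² of |3 x₁² − 1| equals 4/(3√3)). -/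
set_option maxHeartbeats 1000000

open Real intervalIntegral Set MeasureTheory

private lemma base_integral (a u v : ℝ) :
    ∫ φ in u..v, (a * Real.cos φ ^ 2 - 1) =
      a * ((Real.cos v * Real.sin v - Real.cos u * Real.sin u + v - u) / 2) - (v - u) := by
  rw [intervalIntegral.integral_sub (f := fun φ => a * Real.cos φ ^ 2) (g := fun _ => (1:ℝ))
      ((continuous_const.mul (Real.continuous_cos.pow 2)).intervalIntegrable _ _)
      intervalIntegrable_const,
    intervalIntegral.integral_const_mul, integral_cos_sq, intervalIntegral.integral_const]
  simp [smul_eq_mul]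

private lemma inner_big {s : ℝ} (hs : 0 < s) (h : 1 ≤ 3 * s ^ 2) :
    ∫ φ in (0:ℝ)..(2*π), |3 * s ^ 2 * Real.cos φ ^ 2 - 1| =
      4 * (3 * s ^ 2 - 2) * Real.arccos ((Real.sqrt 3 * s)⁻¹)
        + 4 * Real.sqrt (3 * s ^ 2 - 1) + π * (2 - 3 * s ^ 2) := by
  have hπ : (0:ℝ) < π := Real.pi_pos
  have h3 : (0:ℝ) < Real.sqrt 3 := by positivity
  have hsq3 : Real.sqrt 3 ^ 2 = 3 := Real.sq_sqrt (by norm_num)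
  set x : ℝ := (Real.sqrt 3 * s)⁻¹ with hxdef
  have hxpos : 0 < x := by positivity
  have hx2 : 3 * s ^ 2 * x ^ 2 = 1 := by
    rw [hxdef, inv_pow, mul_pow, hsq3]
    field_simp
  have hx1 : x ≤ 1 := by nlinarith
  set c := Real.arccos x with hcdef
  have hc0 : 0 ≤ c := Real.arccos_nonneg x
  have hcos : Real.cos c = x := Real.cos_arccos (by linarith) hx1
  have hc2 : c ≤ π / 2 := Real.arccos_le_pi_div_two.2 hxpos.le
  have hcπ : c ≤ π := by linarith
  have hsin : Real.sin c = Real.sqrt (1 - x ^ 2) := Real.sin_arccos x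
  have h3sx : 3 * s ^ 2 * x = Real.sqrt 3 * s := by
    rw [hxdef]
    field_simp
    nlinarith [hsq3]
  have h3s : Real.sqrt (3 * s ^ 2) = Real.sqrt 3 * s := by
    rw [show (3:ℝ) * s ^ 2 = (Real.sqrt 3 * s) ^ 2 by rw [mul_pow, hsq3],
      Real.sqrt_sq (by positivity)]
  have key : 3 * s ^ 2 * (Real.cos c * Real.sin c) = Real.sqrt (3 * s ^ 2 - 1) := by
    rw [hcos, hsin, ← mul_assoc, h3sx,
      show (3:ℝ) * s ^ 2 - 1 = 3 * s ^ 2 * (1 - x ^ 2) by nlinarith,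
      Real.sqrt_mul (by positivity), h3s]
  -- interval ordering
  have o1 : c ≤ π - c := by linarith
  have o2 : π - c ≤ π + c := by linarith
  have o3 : π + c ≤ 2*π - c := by linarith
  have o4 : 2*π - c ≤ 2*π := by linarith
  have cont : Continuous fun φ : ℝ => |3 * s ^ 2 * Real.cos φ ^ 2 - 1| := by fun_prop
  have Fi : ∀ a b : ℝ, IntervalIntegrable (fun φ : ℝ => |3 * s ^ 2 * Real.cos φ ^ 2 - 1|)
      volume a b := fun a b => cont.intervalIntegrable a b
  -- sign helper facts
  have habs_pos : ∀ φ : ℝ, x ≤ |Real.cos φ| → |3 * s ^ 2 * Real.cos φ ^ 2 - 1|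
      = 3 * s ^ 2 * Real.cos φ ^ 2 - 1 := by
    intro φ hφ
    rw [abs_of_nonneg]
    have h1 : x ^ 2 ≤ Real.cos φ ^ 2 := by
      rw [← sq_abs (Real.cos φ)]
      nlinarith [abs_nonneg (Real.cos φ)]
    nlinarith [sq_nonneg s]
  have habs_neg : ∀ φ : ℝ, |Real.cos φ| ≤ x → |3 * s ^ 2 * Real.cos φ ^ 2 - 1|
      = -(3 * s ^ 2 * Real.cos φ ^ 2 - 1) := by
    intro φ hφ
    rw [abs_of_nonpos]
    have h1 : Real.cos φ ^ 2 ≤ x ^ 2 := by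
      rw [← sq_abs (Real.cos φ)]
      nlinarith [abs_nonneg (Real.cos φ)]
    nlinarith [sq_nonneg s]
  -- the five pieces
  have P1 : ∫ φ in (0:ℝ)..c, |3 * s ^ 2 * Real.cos φ ^ 2 - 1|
      = 3 * s ^ 2 * ((Real.cos c * Real.sin c + c) / 2) - c := by
    rw [intervalIntegral.integral_congr (g := fun φ => 3 * s ^ 2 * Real.cos φ ^ 2 - 1) ?_,
      base_integral]
    · simp
    · intro φ hφ
      rw [uIcc_of_le hc0] at hφ
      apply habs_pos
      have := Real.cos_le_cos_of_nonneg_of_le_pi hφ.1 hcπ hφ.2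
      rw [hcos] at this
      rw [abs_of_nonneg (by linarith)]
      exact this
  have P2 : ∫ φ in c..(π - c), |3 * s ^ 2 * Real.cos φ ^ 2 - 1|
      = -(3 * s ^ 2 * ((-(Real.cos c * Real.sin c) - Real.cos c * Real.sin c + (π - c) - c) / 2)
        - ((π - c) - c)) := by
    rw [intervalIntegral.integral_congr (g := fun φ => -(3 * s ^ 2 * Real.cos φ ^ 2 - 1)) ?_,
      intervalIntegral.integral_neg, base_integral]
    · rw [Real.cos_pi_sub, Real.sin_pi_sub]
      ring
    · intro φ hφ
      rw [uIcc_of_le o1] at hφ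
      apply habs_neg
      have h1 := Real.cos_le_cos_of_nonneg_of_le_pi hc0 (by linarith [hφ.2]) hφ.1
      have h2 := Real.cos_le_cos_of_nonneg_of_le_pi (by linarith [hφ.1]) (by linarith) hφ.2
      rw [hcos] at h1
      rw [Real.cos_pi_sub, hcos] at h2
      rw [abs_le]
      exact ⟨by linarith, h1⟩
  have P3 : ∫ φ in (π - c)..(π + c), |3 * s ^ 2 * Real.cos φ ^ 2 - 1|
      = 3 * s ^ 2 * ((-(Real.cos c) * -(Real.sin c) - -(Real.cos c) * Real.sin c + (π + c)
        - (π - c)) / 2) - ((π + c) - (π - c)) := by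
    rw [intervalIntegral.integral_congr (g := fun φ => 3 * s ^ 2 * Real.cos φ ^ 2 - 1) ?_,
      base_integral]
    · rw [Real.cos_pi_sub, Real.sin_pi_sub, show π + c = π - (-c) by ring,
        Real.cos_pi_sub, Real.sin_pi_sub, Real.cos_neg, Real.sin_neg]
    · intro φ hφ
      rw [uIcc_of_le o2] at hφ
      apply habs_pos
      have hcφ : Real.cos φ ≤ -x := by
        rcases le_total φ π with hls | hls
        · have := Real.cos_le_cos_of_nonneg_of_le_pi (by linarith [hφ.1]) hls hφ.1
          rwa [Real.cos_pi_sub, hcos] at this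
        · have h2π : Real.cos (2*π - φ) = Real.cos φ := Real.cos_two_pi_sub φ
          have := Real.cos_le_cos_of_nonneg_of_le_pi (x := π - c) (y := 2*π - φ)
            (by linarith) (by linarith) (by linarith [hφ.2])
          rwa [Real.cos_pi_sub, hcos, h2π] at this
      rw [abs_of_nonpos (by linarith)]
      linarith
  have P4 : ∫ φ in (π + c)..(2*π - c), |3 * s ^ 2 * Real.cos φ ^ 2 - 1|
      = -(3 * s ^ 2 * ((Real.cos c * -(Real.sin c) - -(Real.cos c) * -(Real.sin c)
        + (2*π - c) - (π + c)) / 2) - ((2*π - c) - (π + c))) := by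
    rw [intervalIntegral.integral_congr (g := fun φ => -(3 * s ^ 2 * Real.cos φ ^ 2 - 1)) ?_,
      intervalIntegral.integral_neg, base_integral]
    · rw [Real.cos_two_pi_sub, Real.sin_two_pi_sub,
        show π + c = π - (-c) by ring, Real.cos_pi_sub, Real.sin_pi_sub,
        Real.cos_neg, Real.sin_neg]
    · intro φ hφ
      rw [uIcc_of_le o3] at hφ
      apply habs_neg
      have h2π : Real.cos (2*π - φ) = Real.cos φ := Real.cos_two_pi_sub φ
      have h1 := Real.cos_le_cos_of_nonneg_of_le_pi (x := c) (y := 2*π - φ)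
        hc0 (by linarith [hφ.1]) (by linarith [hφ.2])
      have h2 := Real.cos_le_cos_of_nonneg_of_le_pi (x := 2*π - φ) (y := π - c)
        (by linarith [hφ.2]) (by linarith) (by linarith [hφ.1])
      rw [hcos, h2π] at h1
      rw [Real.cos_pi_sub, hcos, h2π] at h2
      rw [abs_le]
      exact ⟨by linarith, h1⟩
  have P5 : ∫ φ in (2*π - c)..(2*π), |3 * s ^ 2 * Real.cos φ ^ 2 - 1|
      = 3 * s ^ 2 * ((Real.cos (2*π) * Real.sin (2*π) - Real.cos c * -(Real.sin c)
        + 2*π - (2*π - c)) / 2) - (2*π - (2*π - c)) := by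
    rw [intervalIntegral.integral_congr (g := fun φ => 3 * s ^ 2 * Real.cos φ ^ 2 - 1) ?_,
      base_integral]
    · rw [Real.cos_two_pi_sub, Real.sin_two_pi_sub]
    · intro φ hφ
      rw [uIcc_of_le o4] at hφ
      apply habs_pos
      have h2π : Real.cos (2*π - φ) = Real.cos φ := Real.cos_two_pi_sub φ
      have h1 := Real.cos_le_cos_of_nonneg_of_le_pi (x := 2*π - φ) (y := c)
        (by linarith [hφ.2]) hcπ (by linarith [hφ.1])
      rw [hcos, h2π] at h1
      rw [abs_of_nonneg (by linarith)]
      exact h1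
  have split1 := intervalIntegral.integral_add_adjacent_intervals (Fi 0 c) (Fi c (2*π))
  have split2 := intervalIntegral.integral_add_adjacent_intervals (Fi c (π - c)) (Fi (π - c) (2*π))
  have split3 := intervalIntegral.integral_add_adjacent_intervals (Fi (π - c) (π + c)) (Fi (π + c) (2*π))
  have split4 := intervalIntegral.integral_add_adjacent_intervals (Fi (π + c) (2*π - c)) (Fi (2*π - c) (2*π))
  rw [← split1, ← split2, ← split3, ← split4, P1, P2, P3, P4, P5]
  rw [Real.cos_two_pi, Real.sin_two_pi]
  linear_combination 4 * key

private lemma inner_small {s : ℝ} (h : 3 * s ^ 2 ≤ 1) :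
    ∫ φ in (0:ℝ)..(2*π), |3 * s ^ 2 * Real.cos φ ^ 2 - 1| = 2 * π - 3 * π * s ^ 2 := by
  have hcong : ∀ φ ∈ uIcc (0:ℝ) (2*π),
      |3 * s ^ 2 * Real.cos φ ^ 2 - 1| = -(3 * s ^ 2 * Real.cos φ ^ 2 - 1) := by
    intro φ _
    rw [abs_of_nonpos]
    nlinarith [Real.cos_sq_le_one φ, sq_nonneg s, sq_nonneg (Real.cos φ),
      mul_nonneg (sq_nonneg s) (sub_nonneg.2 (Real.cos_sq_le_one φ))]
  rw [intervalIntegral.integral_congr hcong, intervalIntegral.integral_neg, base_integral]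
  simp [Real.cos_two_pi, Real.sin_two_pi]
  ring

noncomputable def Hmid (θ : ℝ) : ℝ :=
  -(4 * Real.cos θ * Real.sin θ ^ 2 * Real.arccos ((Real.sqrt 3 * Real.sin θ)⁻¹)
    + 16 / (3 * Real.sqrt 3) * Real.arcsin (Real.sqrt (3/2) * Real.cos θ)
    + 4 / 3 * Real.cos θ * Real.sqrt (3 * Real.sin θ ^ 2 - 1)
    + π * (Real.cos θ ^ 3 - Real.cos θ))

lemma Hmid_deriv {θ : ℝ} (h : 1 < Real.sqrt 3 * Real.sin θ) :
    HasDerivAt Hmid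
      ((4 * (3 * Real.sin θ ^ 2 - 2) * Real.arccos ((Real.sqrt 3 * Real.sin θ)⁻¹)
        + 4 * Real.sqrt (3 * Real.sin θ ^ 2 - 1) + π * (2 - 3 * Real.sin θ ^ 2))
        * Real.sin θ) θ := by
  have h3 : (0:ℝ) < Real.sqrt 3 := by positivity
  have hsq3 : Real.sqrt 3 ^ 2 = 3 := Real.sq_sqrt (by norm_num)
  have hsq2 : Real.sqrt 2 ^ 2 = 2 := Real.sq_sqrt (by norm_num)
  have h2 : (0:ℝ) < Real.sqrt 2 := by positivity
  have hS : 0 < Real.sin θ := by nlinarith [Real.sqrt_nonneg 3]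
  have h31 : 1 < 3 * Real.sin θ ^ 2 := by nlinarith
  have hpyth := Real.sin_sq_add_cos_sq θ
  set S := Real.sin θ with hSdef
  set C := Real.cos θ with hCdef
  set R := Real.sqrt (3 * S ^ 2 - 1) with hRdef
  have hRpos : 0 < R := Real.sqrt_pos.2 (by linarith)
  have hR2 : R ^ 2 = 3 * S ^ 2 - 1 := Real.sq_sqrt (by linarith)
  -- sqrt simplifications
  have e1 : Real.sqrt (1 - ((Real.sqrt 3 * S)⁻¹) ^ 2) = R / (Real.sqrt 3 * S) := by
    have hS0 : S ≠ 0 := ne_of_gt hS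
    rw [show 1 - ((Real.sqrt 3 * S)⁻¹) ^ 2 = (3 * S ^ 2 - 1) / (Real.sqrt 3 * S) ^ 2 by
        rw [inv_pow, mul_pow, hsq3]; field_simp
      , Real.sqrt_div (by linarith) _, Real.sqrt_sq (by positivity), hRdef]
  have e2 : Real.sqrt (1 - (Real.sqrt (3/2) * C) ^ 2) = R / Real.sqrt 2 := by
    have hv : Real.sqrt (3/2) ^ 2 = 3/2 := Real.sq_sqrt (by norm_num)
    rw [show 1 - (Real.sqrt (3/2) * C) ^ 2 = (3 * S ^ 2 - 1) / 2 by
        rw [mul_pow, hv]; linarith [hpyth]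
      , Real.sqrt_div (by linarith) 2, hRdef]
  have e3 : Real.sqrt (3/2) = Real.sqrt 3 / Real.sqrt 2 := Real.sqrt_div (by norm_num) 2
  -- argument bounds for arccos / arcsin
  have hw1 : (Real.sqrt 3 * S)⁻¹ < 1 := by
    rw [inv_lt_one_iff₀]; right; exact h
  have hw0 : 0 < (Real.sqrt 3 * S)⁻¹ := by positivity
  have hvlt : (Real.sqrt (3/2) * C) ^ 2 < 1 := by
    have hv : Real.sqrt (3/2) ^ 2 = 3/2 := Real.sq_sqrt (by norm_num)
    rw [mul_pow, hv]; nlinarith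
  have hvne1 : Real.sqrt (3/2) * C ≠ 1 := by intro hh; rw [hh] at hvlt; norm_num at hvlt
  have hvne1' : Real.sqrt (3/2) * C ≠ -1 := by intro hh; rw [hh] at hvlt; norm_num at hvlt
  -- basic derivatives
  have hsin := Real.hasDerivAt_sin θ
  have hcos := Real.hasDerivAt_cos θ
  have hw : HasDerivAt (fun t => (Real.sqrt 3 * Real.sin t)⁻¹)
      (-(Real.sqrt 3 * Real.cos θ) / (Real.sqrt 3 * Real.sin θ) ^ 2) θ :=
    (hsin.const_mul (Real.sqrt 3)).inv (by positivity)
  have harccos := (Real.hasDerivAt_arccos (x := (Real.sqrt 3 * S)⁻¹)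
      (by linarith) (by linarith)).comp θ hw
  have hT1 := ((hcos.const_mul (4:ℝ)).mul (hsin.pow 2)).mul harccos
  have harcsin := (Real.hasDerivAt_arcsin (x := Real.sqrt (3/2) * C) hvne1' hvne1).comp θ
      (hcos.const_mul (Real.sqrt (3/2)))
  have hT2 := harcsin.const_mul (16 / (3 * Real.sqrt 3))
  have hinner : HasDerivAt (fun t => 3 * Real.sin t ^ 2 - 1)
      (3 * (2 * Real.sin θ ^ 1 * Real.cos θ)) θ := ((hsin.pow 2).const_mul 3).sub_const 1
  have hsqrt := (Real.hasDerivAt_sqrt (by linarith : 3 * S ^ 2 - 1 ≠ 0)).comp θ hinner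
  have hT3 := (hcos.const_mul ((4:ℝ)/3)).mul hsqrt
  have hT4 := ((hcos.pow 3).sub hcos).const_mul π
  have Htot := (((hT1.add hT2).add hT3).add hT4).neg
  have hgoal : HasDerivAt Hmid
      (-((4 * -S * S ^ 2 + 4 * C * (2 * S ^ 1 * C)) * Real.arccos ((Real.sqrt 3 * S)⁻¹)
          + 4 * C * S ^ 2 * (-(1 / Real.sqrt (1 - ((Real.sqrt 3 * S)⁻¹) ^ 2))
              * (-(Real.sqrt 3 * C) / (Real.sqrt 3 * S) ^ 2))
        + 16 / (3 * Real.sqrt 3) * (1 / Real.sqrt (1 - (Real.sqrt (3/2) * C) ^ 2)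
            * (Real.sqrt (3/2) * -S))
        + ((4:ℝ)/3 * -S * R
            + 4/3 * C * (1 / (2 * R) * (3 * (2 * S ^ 1 * C))))
        + π * (3 * C ^ 2 * -S - -S))) θ := Htot
  convert hgoal using 1
  rw [e1, e2, e3]
  have hSne : S ≠ 0 := ne_of_gt hS
  have hRne : R ≠ 0 := ne_of_gt hRpos
  have h3ne : Real.sqrt 3 ≠ 0 := ne_of_gt h3
  have h2ne : Real.sqrt 2 ≠ 0 := ne_of_gt h2
  field_simp
  linear_combination (24 * R * Real.arccos (1 / (S * Real.sqrt 3)) - 9 * R * π + 24) * hpyth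
    + 8 * hR2

private lemma F1_deriv (θ : ℝ) :
    HasDerivAt (fun t => π * Real.cos t - π * Real.cos t ^ 3)
      ((2 * π - 3 * π * Real.sin θ ^ 2) * Real.sin θ) θ := by
  have h := ((Real.hasDerivAt_cos θ).const_mul π).sub
    (((Real.hasDerivAt_cos θ).pow 3).const_mul π)
  refine (show HasDerivAt (fun t => π * Real.cos t - π * Real.cos t ^ 3) _ θ from h).congr_deriv ?_
  have hp := Real.sin_sq_add_cos_sq θ
  push_cast
  linear_combination (3 * π * Real.sin θ) * hp

/-- The spherical integral identity
`∫₀^π ∫₀^{2π} |3 sin²θ cos²φ − 1| sinθ dφ dθ = 16π/(3√3)`. -/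
theorem spherical_integral_abs :
    (∫ θ in (0 : ℝ)..π, ∫ φ in (0 : ℝ)..(2 * π),
      |3 * Real.sin θ ^ 2 * Real.cos φ ^ 2 - 1| * Real.sin θ) =
    16 * π / (3 * Real.sqrt 3) := by
  have hπ : (0:ℝ) < π := Real.pi_pos
  have h3 : (0:ℝ) < Real.sqrt 3 := by positivity
  have hsq3 : Real.sqrt 3 ^ 2 = 3 := Real.sq_sqrt (by norm_num)
  have h3gt1 : (1:ℝ) < Real.sqrt 3 := by nlinarith [Real.sqrt_nonneg 3]
  have hinvle : (Real.sqrt 3)⁻¹ ≤ 1 := by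
    rw [inv_le_one_iff₀]; right; linarith
  have hinvlt : (Real.sqrt 3)⁻¹ < 1 := by
    rw [inv_lt_one_iff₀]; right; exact h3gt1
  have hinvpos : (0:ℝ) < (Real.sqrt 3)⁻¹ := by positivity
  have hinv2 : ((Real.sqrt 3)⁻¹) ^ 2 = 1/3 := by
    rw [inv_pow, hsq3]; norm_num
  set θ1 := Real.arcsin (Real.sqrt 3)⁻¹ with hθ1def
  have hs1 : Real.sin θ1 = (Real.sqrt 3)⁻¹ := Real.sin_arcsin (by linarith) hinvle
  have hθ1pos : 0 < θ1 := Real.arcsin_pos.2 hinvpos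
  have hθ1lt : θ1 < π/2 := Real.arcsin_lt_pi_div_two.2 hinvlt
  -- monotonicity helpers
  have sin_ub : ∀ θ, 0 ≤ θ → θ ≤ θ1 → Real.sin θ ≤ (Real.sqrt 3)⁻¹ := by
    intro θ h0 h1
    rw [← hs1]
    exact Real.strictMonoOn_sin.monotoneOn ⟨by linarith, by linarith⟩
      ⟨by linarith, by linarith⟩ h1
  have sin_lb : ∀ θ, θ1 ≤ θ → θ ≤ π - θ1 → (Real.sqrt 3)⁻¹ ≤ Real.sin θ := by
    intro θ h0 h1
    rcases le_total θ (π/2) with hc | hc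
    · rw [← hs1]
      exact Real.strictMonoOn_sin.monotoneOn ⟨by linarith, by linarith⟩
        ⟨by linarith, by linarith⟩ h0
    · rw [← Real.sin_pi_sub, ← hs1]
      exact Real.strictMonoOn_sin.monotoneOn ⟨by linarith, by linarith⟩
        ⟨by linarith, by linarith⟩ (by linarith)
  have sin_lb' : ∀ θ, θ1 < θ → θ < π - θ1 → (Real.sqrt 3)⁻¹ < Real.sin θ := by
    intro θ h0 h1
    rcases le_total θ (π/2) with hc | hc
    · rw [← hs1]
      exact Real.strictMonoOn_sin ⟨by linarith, by linarith⟩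
        ⟨by linarith, by linarith⟩ h0
    · rw [← Real.sin_pi_sub, ← hs1]
      exact Real.strictMonoOn_sin ⟨by linarith, by linarith⟩
        ⟨by linarith, by linarith⟩ (by linarith)
  -- rewrite inner integrand
  simp only [intervalIntegral.integral_mul_const]
  -- continuity of the full integrand
  have hFcont : Continuous fun θ =>
      (∫ φ in (0:ℝ)..(2*π), |3 * Real.sin θ ^ 2 * Real.cos φ ^ 2 - 1|) * Real.sin θ := by
    apply Continuous.mul _ Real.continuous_sin
    exact continuous_parametric_intervalIntegral_of_continuous'
      (f := fun θ φ => |3 * Real.sin θ ^ 2 * Real.cos φ ^ 2 - 1|) (by fun_prop) 0 (2*π)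
  -- split the integral
  rw [← intervalIntegral.integral_add_adjacent_intervals (a := (0:ℝ)) (b := θ1) (c := π)
      (hFcont.intervalIntegrable _ _) (hFcont.intervalIntegrable _ _),
    ← intervalIntegral.integral_add_adjacent_intervals (a := θ1) (b := π - θ1) (c := π)
      (hFcont.intervalIntegrable _ _) (hFcont.intervalIntegrable _ _)]
  -- piece 1
  have E1 : ∫ θ in (0:ℝ)..θ1,
      (∫ φ in (0:ℝ)..(2*π), |3 * Real.sin θ ^ 2 * Real.cos φ ^ 2 - 1|) * Real.sin θ
      = ∫ θ in (0:ℝ)..θ1, (2*π - 3*π*Real.sin θ ^ 2) * Real.sin θ := by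
    apply intervalIntegral.integral_congr
    intro θ hθ
    rw [uIcc_of_le hθ1pos.le] at hθ
    have hub := sin_ub θ hθ.1 hθ.2
    have hnn : 0 ≤ Real.sin θ := Real.sin_nonneg_of_nonneg_of_le_pi hθ.1
      (by linarith [hθ.2, hθ1lt])
    have hle : 3 * Real.sin θ ^ 2 ≤ 1 := by nlinarith
    dsimp only
    rw [inner_small hle]
  have V1 : ∫ θ in (0:ℝ)..θ1, (2*π - 3*π*Real.sin θ ^ 2) * Real.sin θ
      = (π * Real.cos θ1 - π * Real.cos θ1 ^ 3) - (π * Real.cos 0 - π * Real.cos 0 ^ 3) :=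
    intervalIntegral.integral_eq_sub_of_hasDerivAt (fun θ _ => F1_deriv θ)
      ((Continuous.intervalIntegrable (by fun_prop) _ _))
  -- piece 3
  have E3 : ∫ θ in (π - θ1)..π,
      (∫ φ in (0:ℝ)..(2*π), |3 * Real.sin θ ^ 2 * Real.cos φ ^ 2 - 1|) * Real.sin θ
      = ∫ θ in (π - θ1)..π, (2*π - 3*π*Real.sin θ ^ 2) * Real.sin θ := by
    apply intervalIntegral.integral_congr
    intro θ hθ
    rw [uIcc_of_le (by linarith)] at hθ
    have hub := sin_ub (π - θ) (by linarith [hθ.2]) (by linarith [hθ.1])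
    rw [Real.sin_pi_sub] at hub
    have hnn : 0 ≤ Real.sin θ := Real.sin_nonneg_of_nonneg_of_le_pi (by linarith [hθ.1]) hθ.2
    have hle : 3 * Real.sin θ ^ 2 ≤ 1 := by nlinarith
    dsimp only
    rw [inner_small hle]
  have V3 : ∫ θ in (π - θ1)..π, (2*π - 3*π*Real.sin θ ^ 2) * Real.sin θ
      = (π * Real.cos π - π * Real.cos π ^ 3)
        - (π * Real.cos (π - θ1) - π * Real.cos (π - θ1) ^ 3) :=
    intervalIntegral.integral_eq_sub_of_hasDerivAt (fun θ _ => F1_deriv θ)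
      ((Continuous.intervalIntegrable (by fun_prop) _ _))
  -- piece 2
  have E2 : ∫ θ in θ1..(π - θ1),
      (∫ φ in (0:ℝ)..(2*π), |3 * Real.sin θ ^ 2 * Real.cos φ ^ 2 - 1|) * Real.sin θ
      = ∫ θ in θ1..(π - θ1),
        (4 * (3 * Real.sin θ ^ 2 - 2) * Real.arccos ((Real.sqrt 3 * Real.sin θ)⁻¹)
          + 4 * Real.sqrt (3 * Real.sin θ ^ 2 - 1) + π * (2 - 3 * Real.sin θ ^ 2))
          * Real.sin θ := by
    apply intervalIntegral.integral_congr
    intro θ hθ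
    rw [uIcc_of_le (by linarith)] at hθ
    have hlb := sin_lb θ hθ.1 hθ.2
    have hspos : 0 < Real.sin θ := lt_of_lt_of_le hinvpos hlb
    have hge : 1 ≤ 3 * Real.sin θ ^ 2 := by nlinarith
    dsimp only
    rw [inner_big hspos hge]
  have hmono : θ1 ≤ π - θ1 := by linarith
  -- continuity of g2 on the closed middle interval
  have hg2cont : ContinuousOn (fun θ =>
      (4 * (3 * Real.sin θ ^ 2 - 2) * Real.arccos ((Real.sqrt 3 * Real.sin θ)⁻¹)
        + 4 * Real.sqrt (3 * Real.sin θ ^ 2 - 1) + π * (2 - 3 * Real.sin θ ^ 2))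
        * Real.sin θ) (Icc θ1 (π - θ1)) := by
    have hne : ∀ θ ∈ Icc θ1 (π - θ1), Real.sqrt 3 * Real.sin θ ≠ 0 := by
      intro θ hθ
      have := sin_lb θ hθ.1 hθ.2
      have : 0 < Real.sin θ := lt_of_lt_of_le hinvpos this
      positivity
    have hc1 : ContinuousOn (fun θ => (Real.sqrt 3 * Real.sin θ)⁻¹) (Icc θ1 (π - θ1)) :=
      ((continuous_const.mul Real.continuous_sin).continuousOn).inv₀ hne
    have hc2 : ContinuousOn (fun θ => Real.arccos ((Real.sqrt 3 * Real.sin θ)⁻¹))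
        (Icc θ1 (π - θ1)) := Real.continuous_arccos.comp_continuousOn hc1
    apply ContinuousOn.mul _ Real.continuous_sin.continuousOn
    apply ContinuousOn.add
    apply ContinuousOn.add
    · exact ((by fun_prop : Continuous fun θ =>
        4 * (3 * Real.sin θ ^ 2 - 2)).continuousOn).mul hc2
    · exact (by fun_prop : Continuous fun θ =>
        4 * Real.sqrt (3 * Real.sin θ ^ 2 - 1)).continuousOn
    · exact (by fun_prop : Continuous fun θ => π * (2 - 3 * Real.sin θ ^ 2)).continuousOn
  have hHcont : ContinuousOn Hmid (Icc θ1 (π - θ1)) := by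
    have hne : ∀ θ ∈ Icc θ1 (π - θ1), Real.sqrt 3 * Real.sin θ ≠ 0 := by
      intro θ hθ
      have := sin_lb θ hθ.1 hθ.2
      have : 0 < Real.sin θ := lt_of_lt_of_le hinvpos this
      positivity
    have hc1 : ContinuousOn (fun θ => (Real.sqrt 3 * Real.sin θ)⁻¹) (Icc θ1 (π - θ1)) :=
      ((continuous_const.mul Real.continuous_sin).continuousOn).inv₀ hne
    have hc2 : ContinuousOn (fun θ => Real.arccos ((Real.sqrt 3 * Real.sin θ)⁻¹))
        (Icc θ1 (π - θ1)) := Real.continuous_arccos.comp_continuousOn hc1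
    unfold Hmid
    apply ContinuousOn.neg
    apply ContinuousOn.add
    apply ContinuousOn.add
    apply ContinuousOn.add
    · exact ((by fun_prop : Continuous fun θ =>
        4 * Real.cos θ * Real.sin θ ^ 2).continuousOn).mul hc2
    · exact (continuous_const.mul (Real.continuous_arcsin.comp
        (continuous_const.mul Real.continuous_cos))).continuousOn
    · exact (by fun_prop : Continuous fun θ =>
        4 / 3 * Real.cos θ * Real.sqrt (3 * Real.sin θ ^ 2 - 1)).continuousOn
    · exact (by fun_prop : Continuous fun θ =>
        π * (Real.cos θ ^ 3 - Real.cos θ)).continuousOn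
  have V2 : ∫ θ in θ1..(π - θ1),
      (4 * (3 * Real.sin θ ^ 2 - 2) * Real.arccos ((Real.sqrt 3 * Real.sin θ)⁻¹)
        + 4 * Real.sqrt (3 * Real.sin θ ^ 2 - 1) + π * (2 - 3 * Real.sin θ ^ 2))
        * Real.sin θ = Hmid (π - θ1) - Hmid θ1 := by
    apply intervalIntegral.integral_eq_sub_of_hasDeriv_right_of_le hmono hHcont
    · intro x hx
      have hlt := sin_lb' x hx.1 hx.2
      have h1lt : 1 < Real.sqrt 3 * Real.sin x := by
        have := mul_lt_mul_of_pos_left hlt h3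
        rwa [mul_inv_cancel₀ (ne_of_gt h3)] at this
      exact (Hmid_deriv h1lt).hasDerivWithinAt
    · exact ContinuousOn.intervalIntegrable (by rwa [uIcc_of_le hmono])
  rw [E1, V1, E2, V2, E3, V3]
  -- evaluate
  have earccos : Real.arccos ((Real.sqrt 3 * Real.sin θ1)⁻¹) = 0 := by
    rw [hs1, mul_inv_cancel₀ (ne_of_gt h3), inv_one, Real.arccos_one]
  have esqrt : Real.sqrt (3 * Real.sin θ1 ^ 2 - 1) = 0 := by
    rw [hs1, hinv2, show (3:ℝ) * (1/3) - 1 = 0 by norm_num, Real.sqrt_zero]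
  have ecos1 : Real.sqrt (3/2) * Real.cos θ1 = 1 := by
    rw [hθ1def, Real.cos_arcsin, hinv2, show (1:ℝ) - 1/3 = 2/3 by norm_num,
      ← Real.sqrt_mul (by norm_num)]
    norm_num
  have earcsin : Real.arcsin (Real.sqrt (3/2) * Real.cos θ1) = π / 2 := by
    rw [ecos1, Real.arcsin_one]
  have earcsin' : Real.arcsin (Real.sqrt (3/2) * Real.cos (π - θ1)) = -(π / 2) := by
    rw [Real.cos_pi_sub, mul_neg, ecos1, Real.arcsin_neg_one]
  have earcsin'' : Real.arcsin (Real.sqrt (3/2) * -Real.cos θ1) = -(π/2) := by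
    rw [mul_neg, Real.arcsin_neg, ecos1, Real.arcsin_one]
  simp only [Hmid, Real.cos_pi_sub, Real.sin_pi_sub, earccos, esqrt, earcsin, earcsin',
    earcsin'', Real.cos_zero, Real.cos_pi]
  ring
end
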